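/- Let A₀ be a unital C*-algebra, let G be a simple graph on {1,…,n}, and let A ∈ M_n(A₀) be selfadjoint with sparsity pattern compatible with G (for i ≠ j, a_ij ≠ 0 implies i and j are adjacent in G) and with spectrum contained in [−1,1]. Let f : ℝ → ℝ be continuous on [−1,1], and let f(A) be defined by the continuous functional calculus. Then for every k ≥ 0, every real polynomial p of degree at most k, and every pair of indices i ≠ j such that there is no walk in G from i to j of length at most k, one has ‖[f(A)]_{ij}‖ ≤ sup_{x ∈ [−1,1]} |f(x) − p(x)|. -/

import Mathlib

open Matrix Polynomial
set_option maxHeartbeats 1000000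

section Aux

variable {A₀ : Type*} [CStarAlgebra A₀] {n : ℕ}
    {𝒜 : Type*} [CStarAlgebra 𝒜]

lemma stdBasisMatrix_star (j l : Fin n) (b : A₀) :
    star (Matrix.single j l b) = Matrix.single l j (star b) := by
  ext s t
  simp only [Matrix.star_eq_conjTranspose, Matrix.conjTranspose_apply, Matrix.single,
    Matrix.of_apply]
  aesop

/-- The nonunital star hom `b ↦ φ (stdBasisMatrix j j b)`. -/
noncomputable def diagEmbed (φ : Matrix (Fin n) (Fin n) A₀ ≃⋆ₐ[ℂ] 𝒜) (j : Fin n) :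
    A₀ →⋆ₙₐ[ℂ] 𝒜 where
  toFun b := φ (Matrix.single j j b)
  map_smul' c b := by
    show φ (Matrix.single j j (c • b)) = c • φ (Matrix.single j j b)
    rw [← map_smul φ, Matrix.smul_single]
  map_zero' := by
    show φ (Matrix.single j j (0 : A₀)) = 0
    have : Matrix.single j j (0 : A₀) = 0 := by
      ext l m; simp [Matrix.single]
    rw [this, map_zero]
  map_add' a b := by
    show φ (Matrix.single j j (a + b)) = _
    rw [Matrix.single_add, map_add]
  map_mul' a b := by
    show φ (Matrix.single j j (a * b)) = _
    rw [← Matrix.single_mul_single_same a j j j b, _root_.map_mul]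
  map_star' b := by
    show φ (Matrix.single j j (star b)) = _
    rw [← stdBasisMatrix_star, map_star]

lemma diagEmbed_norm (φ : Matrix (Fin n) (Fin n) A₀ ≃⋆ₐ[ℂ] 𝒜) (j : Fin n) (b : A₀) :
    ‖φ (Matrix.single j j b)‖ = ‖b‖ := by
  have := NonUnitalStarAlgHom.norm_map (diagEmbed φ j) (fun x y hxy => ?_) b
  · exact this
  · have h1 := φ.injective hxy
    have := congrFun (congrFun h1 j) j
    simpa [Matrix.single] using this

/-- Key: entry norm bounded by ambient norm. -/
lemma entry_norm_le (φ : Matrix (Fin n) (Fin n) A₀ ≃⋆ₐ[ℂ] 𝒜) (B : 𝒜) (i j : Fin n) :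
    ‖(φ.symm B) i j‖ ≤ ‖B‖ := by
  set M := φ.symm B with hM
  set a := M i j with ha
  have proj_norm : ∀ l : Fin n, ‖φ (Matrix.single l l (1 : A₀))‖ ≤ 1 := by
    intro l
    set q := φ (Matrix.single l l (1 : A₀)) with hq
    have hidem : q * q = q := by
      rw [hq, ← map_mul φ, Matrix.single_mul_single_same, one_mul]
    have hsa : star q = q := by
      rw [hq, ← map_star φ, stdBasisMatrix_star, star_one]
    have h2 : ‖q‖ * ‖q‖ = ‖q‖ := by
      conv_lhs => rw [← CStarRing.norm_star_mul_self (x := q)]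
      rw [hsa, hidem]
    nlinarith [norm_nonneg q]
  have hBM : B = φ M := (φ.apply_symm_apply B).symm
  have matkey : Matrix.single i i (1 : A₀) * M * Matrix.single j j (1 : A₀)
      = Matrix.single i j a := by
    ext s t
    by_cases hs : s = i
    · by_cases ht : t = j
      · rw [hs, ht, Matrix.mul_single_apply_same, Matrix.single_mul_apply_same,
          Matrix.single_apply_same, one_mul, mul_one, ha]
      · rw [Matrix.mul_single_apply_of_ne _ _ _ _ _ ht,
          Matrix.single_apply_of_ne _ _ _ _ _ (by tauto)]
    · by_cases ht : t = j
      · rw [ht, Matrix.mul_single_apply_same,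
          Matrix.single_mul_apply_of_ne _ _ _ _ _ hs, zero_mul,
          Matrix.single_apply_of_ne _ _ _ _ _ (by tauto)]
      · rw [Matrix.mul_single_apply_of_ne _ _ _ _ _ ht,
          Matrix.single_apply_of_ne _ _ _ _ _ (by tauto)]
  have key : φ (Matrix.single i i (1:A₀)) * B * φ (Matrix.single j j (1:A₀))
      = φ (Matrix.single i j a) := by
    rw [hBM, ← map_mul φ, ← map_mul φ, matkey]
  have hnorm_ij : ‖φ (Matrix.single i j a)‖ = ‖a‖ := by
    have hsq : ‖φ (Matrix.single i j a)‖ ^ 2 = ‖a‖ ^ 2 := by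
      rw [sq, ← CStarRing.norm_star_mul_self, ← map_star φ, ← map_mul φ, stdBasisMatrix_star,
        Matrix.single_mul_single_same, diagEmbed_norm, sq, CStarRing.norm_star_mul_self]
    have h1 := norm_nonneg (φ (Matrix.single i j a))
    have h2 := norm_nonneg a
    nlinarith
  calc ‖a‖ = ‖φ (Matrix.single i i (1:A₀)) * B * φ (Matrix.single j j (1:A₀))‖ := by
        rw [key, hnorm_ij]
    _ ≤ ‖φ (Matrix.single i i (1:A₀)) * B‖ * ‖φ (Matrix.single j j (1:A₀))‖ :=
        norm_mul_le _ _
    _ ≤ (‖φ (Matrix.single i i (1:A₀))‖ * ‖B‖) * ‖φ (Matrix.single j j (1:A₀))‖ := by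
        gcongr
        exact norm_mul_le _ _
    _ ≤ (1 * ‖B‖) * 1 := by
        gcongr
        · exact proj_norm i
        · exact proj_norm j
    _ = ‖B‖ := by ring

end Aux

/-- Entries of powers vanish when there is no short walk. -/
lemma pow_entry_eq_zero {A₀ : Type*} [CStarAlgebra A₀] {n : ℕ}
    (G : SimpleGraph (Fin n)) (A : Matrix (Fin n) (Fin n) A₀)
    (hcompat : ∀ i j : Fin n, i ≠ j → A i j ≠ 0 → G.Adj i j) (i : Fin n) :
    ∀ (m : ℕ) (j : Fin n), (¬ ∃ w : G.Walk i j, w.length ≤ m) → (A ^ m) i j = 0 := by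
  intro m
  induction m with
  | zero =>
    intro j hw
    have hij : i ≠ j := by
      rintro rfl
      exact hw ⟨SimpleGraph.Walk.nil, by simp⟩
    simp [Matrix.one_apply, hij]
  | succ m ih =>
    intro j hw
    rw [pow_succ, Matrix.mul_apply]
    apply Finset.sum_eq_zero
    intro l _
    by_cases hAl : A l j = 0
    · rw [hAl, mul_zero]
    · have hl : (A ^ m) i l = 0 := by
        apply ih
        rintro ⟨w, hwl⟩
        by_cases hlj : l = j
        · subst hlj
          exact hw ⟨w, by omega⟩
        · have hadj : G.Adj l j := hcompat l j hlj hAl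
          exact hw ⟨w.concat hadj, by simp [SimpleGraph.Walk.length_concat]; omega⟩
      rw [hl, zero_mul]



/-- Let `A ∈ Mₙ(A₀)` be selfadjoint with spectrum in `[-1,1]` and sparsity
pattern compatible with a simple graph `G`, and let `f : ℝ → ℝ` be continuous on `[-1,1]`.
(The C*-algebra `Mₙ(A₀)` is realized via a *-isomorphism `φ` onto a C*-algebra `𝒜`, and
`f(A) = φ.symm (cfc f (φ A))` is given by the continuous functional calculus.)  Then for
every `k ≥ 0`, every real polynomial `p` of degree at most `k`, and every pair `i ≠ j` such
that there is no walk in `G` from `i` to `j` of length at most `k`,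
`‖[f(A)]_{ij}‖ ≤ sup_{x ∈ [-1,1]} |f(x) - p(x)|`. -/
theorem norm_entry_cfc_le_best_approx_of_sparse_selfAdjoint
    {A₀ : Type*} [CStarAlgebra A₀] {n : ℕ}
    {𝒜 : Type*} [CStarAlgebra 𝒜]
    (φ : Matrix (Fin n) (Fin n) A₀ ≃⋆ₐ[ℂ] 𝒜)
    (G : SimpleGraph (Fin n))
    (A : Matrix (Fin n) (Fin n) A₀) (hA : IsSelfAdjoint A)
    (hspec : spectrum ℝ A ⊆ Set.Icc (-1) 1)
    (hcompat : ∀ i j : Fin n, i ≠ j → A i j ≠ 0 → G.Adj i j)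
    (f : ℝ → ℝ) (hf : ContinuousOn f (Set.Icc (-1) 1))
    (k : ℕ) (p : Polynomial ℝ) (hp : p.degree ≤ k)
    (i j : Fin n) (hij : i ≠ j) (hwalk : ¬ ∃ w : G.Walk i j, w.length ≤ k) :
    ‖(φ.symm (cfc f (φ A))) i j‖ ≤
      sSup ((fun x => |f x - p.eval x|) '' Set.Icc (-1 : ℝ) 1) := by
  -- transfer selfadjointness and spectrum through φ
  have hφA_sa : _root_.IsSelfAdjoint (φ A) := by
    rw [_root_.IsSelfAdjoint, ← map_star φ, hA.star_eq]
  have hspec' : spectrum ℝ (φ A) ⊆ Set.Icc (-1) 1 := by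
    have : spectrum ℝ (φ A) = spectrum ℝ A := by
      have := AlgEquiv.spectrum_eq ((AlgEquivClass.toAlgEquiv φ : Matrix (Fin n) (Fin n) A₀ ≃ₐ[ℂ] 𝒜).restrictScalars ℝ) A
      simpa using this
    rw [this]; exact hspec
  -- the supremum set
  set S := (fun x => |f x - p.eval x|) '' Set.Icc (-1 : ℝ) 1 with hS
  have hScompact : IsCompact S := by
    apply (isCompact_Icc).image_of_continuousOn
    exact ((hf.sub (Polynomial.continuous p).continuousOn).abs)
  have hSne : S.Nonempty := ⟨|f 0 - p.eval 0|, ⟨0, by norm_num, rfl⟩⟩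
  have hSbdd : BddAbove S := hScompact.bddAbove
  have hc0 : 0 ≤ sSup S :=
    le_trans (abs_nonneg _) (le_csSup hSbdd ⟨0, by norm_num, rfl⟩)
  -- continuity on the spectrum
  have hfs : ContinuousOn f (spectrum ℝ (φ A)) := hf.mono hspec'
  have hps : ContinuousOn (fun x => p.eval x) (spectrum ℝ (φ A)) :=
    (Polynomial.continuous p).continuousOn
  -- p(A) has zero (i,j) entry
  have hnatdeg : p.natDegree ≤ k := Polynomial.natDegree_le_iff_degree_le.mpr hp
  have hpA : (Polynomial.aeval A p) i j = 0 := by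
    rw [Polynomial.aeval_eq_sum_range]
    rw [Matrix.sum_apply]
    apply Finset.sum_eq_zero
    intro m hm
    rw [Matrix.smul_apply]
    have hm' : m ≤ k := by
      have := Finset.mem_range.mp hm
      omega
    rw [pow_entry_eq_zero G A hcompat i m j
      (fun ⟨w, hwl⟩ => hwalk ⟨w, le_trans hwl hm'⟩), smul_zero]
  -- φ commutes with aeval
  have hφaeval : φ (Polynomial.aeval A p) = Polynomial.aeval (φ A) p := by
    have := Polynomial.aeval_algHom_apply
      (((AlgEquivClass.toAlgEquiv φ : Matrix (Fin n) (Fin n) A₀ ≃ₐ[ℂ] 𝒜).restrictScalars ℝ).toAlgHom) A p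
    simpa using this.symm
  -- cfc of the polynomial equals aeval
  have hcfc_poly : cfc (fun x => p.eval x) (φ A) = Polynomial.aeval (φ A) p := by
    exact cfc_polynomial p (φ A)
  -- the difference
  have hdiff : cfc f (φ A) - Polynomial.aeval (φ A) p
      = cfc (fun x => f x - p.eval x) (φ A) := by
    rw [← hcfc_poly, ← cfc_sub f (fun x => p.eval x) (φ A)]
  -- entry equality
  have hentry : (φ.symm (cfc f (φ A))) i j
      = (φ.symm (cfc (fun x => f x - p.eval x) (φ A))) i j := by
    rw [← hdiff, map_sub, ← hφaeval, φ.symm_apply_apply, Matrix.sub_apply, hpA, sub_zero]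
  rw [hentry]
  refine le_trans (entry_norm_le φ _ i j) ?_
  apply norm_cfc_le hc0
  intro x hx
  rw [Real.norm_eq_abs]
  exact le_csSup hSbdd ⟨x, hspec' hx, rfl⟩
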